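/- In the half-integral matching procedure: if in a contracted graph the current proper-half-integral solution z* has t exposed nodes and k vertex-disjoint odd half-cycles, then (a) augmenting along an alternating path between two exposed nodes decreases t by 2 and leaves k unchanged; (b) alternating along a path from an exposed node to an odd half-cycle and converting the cycle into a blossom decreases both t and k by 1; (c) alternating along an even path to a blossom and converting the blossom into a half-cycle decreases t by 1 and increases k by 1. In all cases t+k does not increase, and it strictly decreases in cases (a) and (b). -/

import Mathlib

open Finset

/-- The graph of half-edges of `z`. -/
def HalfGraph {V : Type*} (G : SimpleGraph V) (z : Sym2 V → ℝ) : SimpleGraph V where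
  Adj u v := G.Adj u v ∧ z s(u, v) = 1/2
  symm := ⟨fun u v h => ⟨h.1.symm, by rw [Sym2.eq_swap]; exact h.2⟩⟩
  loopless := ⟨fun u h => G.irrefl h.1⟩

open Classical in
/-- The set of exposed nodes of `z`. -/
noncomputable def exposedSet {V : Type*} [Fintype V] [DecidableEq V]
    (G : SimpleGraph V) [DecidableRel G.Adj] (z : Sym2 V → ℝ) : Finset V :=
  Finset.univ.filter (fun v => ∑ e ∈ G.incidenceFinset v, z e = 0)

/-- The number of (odd) half-cycles of `z`: connected components of the half-edge
graph containing an edge. -/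
noncomputable def cyclesCount {V : Type*} [Fintype V] (G : SimpleGraph V)
    (z : Sym2 V → ℝ) : ℕ :=
  Nat.card {c : (HalfGraph G z).ConnectedComponent //
    ∃ v, v ∈ c.supp ∧ ((HalfGraph G z).neighborSet v).Nonempty}

/-- A proper-half-integral partial matching whose half-part is a disjoint union of
odd cycles: values in `{0,1/2,1}`, supported on edges, fractional degree at most
one, each vertex on at most one 1-edge and on no 1-edge if it meets a half-edge,
half-degrees 0 or 2, and nontrivial half-components odd. -/
def ProperConfig {V : Type*} [Fintype V] [DecidableEq V] (G : SimpleGraph V)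
    [DecidableRel G.Adj] (z : Sym2 V → ℝ) : Prop :=
  (∀ e, z e = 0 ∨ z e = 1/2 ∨ z e = 1) ∧ (∀ e, e ∉ G.edgeSet → z e = 0) ∧
  (∀ v : V, ∑ e ∈ G.incidenceFinset v, z e ≤ 1) ∧
  (∀ v : V, ((HalfGraph G z).neighborSet v).ncard = 0 ∨
    ((HalfGraph G z).neighborSet v).ncard = 2) ∧
  (∀ c : (HalfGraph G z).ConnectedComponent,
    (∃ v ∈ c.supp, ((HalfGraph G z).neighborSet v).Nonempty) → Odd c.supp.ncard)

/-- `P` is an alternating walk for `z`: 0-edges at even positions, 1-edges at odd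
positions. -/
def AltWalk {V : Type*} (G : SimpleGraph V) (z : Sym2 V → ℝ) {u w : V}
    (P : G.Walk u w) : Prop :=
  ∀ (i : ℕ) (h : i < P.edges.length),
    (Even i → z (P.edges[i]'h) = 0) ∧ (Odd i → z (P.edges[i]'h) = 1)


section Helpers
open SimpleGraph

variable {V : Type*}

lemma forall_mem_of_forall_getElem {α : Type*} {L : List α} {Q : α → Prop}
    (h : ∀ (i : ℕ) (hi : i < L.length), Q (L[i]'hi)) : ∀ e ∈ L, Q e := by
  intro e he
  obtain ⟨i, hi, rfl⟩ := List.mem_iff_getElem.1 he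
  exact h i hi

lemma altSum_path [DecidableEq V] {G : SimpleGraph V} {u w : V} (P : G.Walk u w) :
    P.IsPath → ∀ (g : Sym2 V → ℝ) (a b : ℝ),
      (∀ (i : ℕ) (hi : i < P.edges.length), g (P.edges[i]'hi) = if Odd i then b else a) →
      ∀ v : V, ((P.edges.filter (fun e => decide (v ∈ e))).map g).sum =
        if P.Nil then 0
        else if v = u then a
        else if v = w then (if Odd (P.length - 1) then b else a)
        else if v ∈ P.support then a + b else 0 := by
  induction P with
  | nil => intro _ g a b _ v; simp
  | @cons u x w huv T ih =>
    intro hP g a b hg v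
    rw [SimpleGraph.Walk.cons_isPath_iff] at hP
    have hgT : ∀ (i : ℕ) (hi : i < T.edges.length), g (T.edges[i]'hi) = if Odd i then a else b := by
      intro i hi
      have h2 : i + 1 < (SimpleGraph.Walk.cons huv T).edges.length := by
        simp only [SimpleGraph.Walk.edges_cons, List.length_cons]; omega
      have hh := hg (i + 1) h2
      simp only [SimpleGraph.Walk.edges_cons, List.getElem_cons_succ] at hh
      rw [hh]
      simp only [Nat.odd_add_one]
      by_cases hi' : Odd i <;> simp [hi']
    have h0 : g s(u, x) = a := by
      have h2 : 0 < (SimpleGraph.Walk.cons huv T).edges.length := by simp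
      have hh := hg 0 h2
      simpa using hh
    have hteq := ih hP.1 g b a hgT v
    have hux : u ≠ x := huv.ne
    have huT : u ∉ T.support := hP.2
    have hxT : x ∈ T.support := T.start_mem_support
    have hwT : w ∈ T.support := T.end_mem_support
    have huw : u ≠ w := fun h => huT (h ▸ hwT)
    rw [SimpleGraph.Walk.edges_cons, List.filter_cons]
    by_cases hT : T.Nil
    · have hxw : x = w := hT.eq
      subst hxw
      have hTnil : T = SimpleGraph.Walk.nil := hT.eq_nil
      subst hTnil
      simp only [SimpleGraph.Walk.edges_nil, List.filter_nil, List.map_nil, List.sum_nil]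
      by_cases hvu : v = u
      · subst hvu
        simp [Sym2.mem_iff, h0, hux, huw]
      · by_cases hvx : v = x
        · subst hvx
          simp [Sym2.mem_iff, h0, hvu, Ne.symm hux]
        · have hd : (decide (v ∈ s(u, x)) : Bool) = false := by
            simp [Sym2.mem_iff, hvu, hvx]
          simp [hd, hvu, hvx, SimpleGraph.Walk.support_cons]
    · -- T not nil
      have hxw : x ≠ w := by
        intro h; subst h
        rw [(SimpleGraph.Walk.isPath_iff_eq_nil (p := T)).1 hP.1] at hT
        exact hT SimpleGraph.Walk.nil_nil
      have hlen : 1 ≤ T.length := by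
        have := (SimpleGraph.Walk.not_nil_iff_lt_length).1 hT; omega
    -- parity flip
      have hodd : Odd (T.length - 1) ↔ ¬ Odd T.length := by
        simp only [Nat.odd_iff]; omega
      rw [if_neg hT] at hteq
      have hPnil : ¬ (SimpleGraph.Walk.cons huv T).Nil := SimpleGraph.Walk.not_nil_cons
      rw [if_neg hPnil]
      have hlc : (SimpleGraph.Walk.cons huv T).length - 1 = T.length := by
        simp [SimpleGraph.Walk.length_cons]
      rw [hlc]
      by_cases hvu : v = u
      · subst hvu
        have hd : (decide (v ∈ s(v, x)) : Bool) = true := by simp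
        rw [hd]
        simp only [if_true, Bool.false_eq_true, if_false]
        simp only [List.map_cons, List.sum_cons]
        rw [hteq, h0]
        simp [hux, huw, huT]
      · by_cases hvx : v = x
        · subst hvx
          have hd : (decide (v ∈ s(u, v)) : Bool) = true := by simp
          rw [hd]
          simp only [if_true, Bool.false_eq_true, if_false]
          simp only [List.map_cons, List.sum_cons]
          rw [hteq, h0]
          have hsup : v ∈ (SimpleGraph.Walk.cons huv T).support := by
            simp [SimpleGraph.Walk.support_cons, hxT]
          simp [hvu, hxw, hsup, add_comm]
        · by_cases hvw : v = w
          · subst hvw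
            have hd : (decide (v ∈ s(u, x)) : Bool) = false := by
              simp [Sym2.mem_iff, hvu, hvx]
            rw [hd]
            simp only [if_true, Bool.false_eq_true, if_false]
            rw [hteq]
            simp only [if_neg hvu, if_neg hvx, if_pos rfl]
            by_cases hol : Odd T.length
            · have hno : ¬ Odd (T.length - 1) := fun hc => (hodd.1 hc) hol
              simp [hol, hno]
            · have hyes : Odd (T.length - 1) := hodd.2 hol
              simp [hol, hyes]
          · have hd : (decide (v ∈ s(u, x)) : Bool) = false := by
              simp [Sym2.mem_iff, hvu, hvx]
            rw [hd]
            simp only [if_true, Bool.false_eq_true, if_false]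
            rw [hteq]
            simp only [if_neg hvu, if_neg hvx, if_neg hvw]
            by_cases hvT : v ∈ T.support
            · have hsup : v ∈ (SimpleGraph.Walk.cons huv T).support := by
                simp [SimpleGraph.Walk.support_cons, hvT]
              simp [hvT, hsup, add_comm]
            · have hsup : v ∉ (SimpleGraph.Walk.cons huv T).support := by
                simp [SimpleGraph.Walk.support_cons, hvu, hvT]
              simp [hvT, hsup, hvu]

lemma altSum_cycle [DecidableEq V] {G : SimpleGraph V} {w : V} (C : G.Walk w w)
    (hC : C.IsCycle) (hCodd : Odd C.length) (g : Sym2 V → ℝ) (a b : ℝ)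
    (hg : ∀ (i : ℕ) (hi : i < C.edges.length), g (C.edges[i]'hi) = if Odd i then b else a)
    (v : V) :
    ((C.edges.filter (fun e => decide (v ∈ e))).map g).sum =
      if v = w then 2 * a else if v ∈ C.support then a + b else 0 := by
  cases C with
  | nil => exact absurd rfl hC.ne_nil
  | @cons _ x _ hwx T =>
    have hP : T.IsPath := ((SimpleGraph.Walk.cons_isCycle_iff T hwx).1 hC).1
    have hlen3 : 3 ≤ (SimpleGraph.Walk.cons hwx T).length := hC.three_le_length
    have hlenT : 2 ≤ T.length := by
      simp only [SimpleGraph.Walk.length_cons] at hlen3; omega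
    have hTnil : ¬ T.Nil := by rw [SimpleGraph.Walk.nil_iff_length_eq]; omega
    have hTev : ¬ Odd T.length := by
      rcases hCodd with ⟨m, hm⟩
      simp only [SimpleGraph.Walk.length_cons] at hm
      simp only [Nat.odd_iff]; omega
    have hgT : ∀ (i : ℕ) (hi : i < T.edges.length), g (T.edges[i]'hi) = if Odd i then a else b := by
      intro i hi
      have h2 : i + 1 < (SimpleGraph.Walk.cons hwx T).edges.length := by
        simp only [SimpleGraph.Walk.edges_cons, List.length_cons]; omega
      have hh := hg (i + 1) h2
      simp only [SimpleGraph.Walk.edges_cons, List.getElem_cons_succ] at hh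
      rw [hh]
      simp only [Nat.odd_add_one]
      by_cases hi' : Odd i <;> simp [hi']
    have h0 : g s(w, x) = a := by
      have h2 : 0 < (SimpleGraph.Walk.cons hwx T).edges.length := by simp
      simpa using hg 0 h2
    have hteq := altSum_path T hP g b a hgT v
    rw [if_neg hTnil] at hteq
    have hodd1 : Odd (T.length - 1) := by
      simp only [Nat.odd_iff] at hTev ⊢; omega
    have hxw : x ≠ w := by
      intro h; subst h
      rw [(SimpleGraph.Walk.isPath_iff_eq_nil (p := T)).1 hP] at hTnil
      exact hTnil SimpleGraph.Walk.nil_nil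
    rw [SimpleGraph.Walk.edges_cons, List.filter_cons]
    by_cases hvw : v = w
    · subst hvw
      have hd : (decide (v ∈ s(v, x)) : Bool) = true := by simp
      rw [hd]
      simp only [if_true]
      simp only [List.map_cons, List.sum_cons]
      rw [hteq, h0]
      simp [Ne.symm hxw, hodd1]
      ring
    · by_cases hvx : v = x
      · subst hvx
        have hd : (decide (v ∈ s(w, v)) : Bool) = true := by simp
        rw [hd]
        simp only [if_true, List.map_cons, List.sum_cons]
        rw [hteq, h0]
        have hsup : v ∈ (SimpleGraph.Walk.cons hwx T).support := by
          simp [SimpleGraph.Walk.support_cons, T.start_mem_support]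
        simp [hvw, hsup, add_comm]
      · have hd : (decide (v ∈ s(w, x)) : Bool) = false := by
          simp [Sym2.mem_iff, hvw, hvx]
        rw [hd]
        simp only [Bool.false_eq_true, if_false]
        rw [hteq]
        simp only [if_neg hvx, if_neg hvw]
        by_cases hvT : v ∈ T.support
        · have hsup : v ∈ (SimpleGraph.Walk.cons hwx T).support := by
            simp [SimpleGraph.Walk.support_cons, hvT]
          simp [hvT, hvw, hsup, add_comm]
        · have hsup : v ∉ (SimpleGraph.Walk.cons hwx T).support := by
            simp [SimpleGraph.Walk.support_cons, hvw, hvT]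
          simp [hvT, hvw, hsup]

lemma list_sum_toFinset' [DecidableEq V] (z : Sym2 V → ℝ) {L : List (Sym2 V)} (h : L.Nodup) :
    ∑ e ∈ L.toFinset, z e = (L.map z).sum := List.sum_toFinset _ h

lemma sum_incidence_eq_add [Fintype V] [DecidableEq V] {G : SimpleGraph V} [DecidableRel G.Adj]
    (z z' : Sym2 V → ℝ) (L : List (Sym2 V)) (hnd : L.Nodup)
    (hLE : ∀ e ∈ L, e ∈ G.edgeSet)
    (hout : ∀ e, e ∉ L → z' e = z e) (v : V) :
    ∑ e ∈ G.incidenceFinset v, z' e =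
      ∑ e ∈ G.incidenceFinset v, z e
        + ((L.filter (fun e => decide (v ∈ e))).map (fun e => z' e - z e)).sum := by
  have key : ((L.filter (fun e => decide (v ∈ e))).map (fun e => z' e - z e)).sum
      = ∑ e ∈ G.incidenceFinset v, (z' e - z e) := by
    rw [← list_sum_toFinset' _ (hnd.filter _), List.toFinset_filter]
    apply Finset.sum_subset
    · intro e he
      simp only [Finset.mem_filter, List.mem_toFinset, decide_eq_true_eq] at he
      rw [SimpleGraph.mem_incidenceFinset]
      exact ⟨hLE e he.1, he.2⟩
    · intro e he hne
      have heL : e ∉ L := by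
        intro heL
        apply hne
        simp only [Finset.mem_filter, List.mem_toFinset, decide_eq_true_eq]
        exact ⟨heL, ((SimpleGraph.mem_incidenceFinset (G := G) (v := v) e).1 he).2⟩
      rw [hout e heL]; ring
  rw [key, Finset.sum_sub_distrib]
  ring

lemma reach_out {H' H : SimpleGraph V} {S : Set V}
    (hclosed : ∀ a b, H.Adj a b → a ∈ S → b ∈ S)
    (hpres : ∀ a b, H.Adj a b → a ∉ S → H'.Adj a b) :
    ∀ {a b : V}, H.Walk a b → a ∉ S → H'.Reachable a b ∧ b ∉ S := by
  intro a b p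
  induction p with
  | nil => exact fun ha => ⟨Reachable.refl _, ha⟩
  | @cons a x b hadj q ih =>
    intro ha
    have hx : x ∉ S := fun hx => ha (hclosed x a hadj.symm hx)
    obtain ⟨r, hb⟩ := ih hx
    exact ⟨((hpres a x hadj ha).reachable).trans r, hb⟩

lemma reachable_of_mem_support [DecidableEq V] {H : SimpleGraph V} {x y a b : V}
    (D : H.Walk x y) (ha : a ∈ D.support) (hb : b ∈ D.support) : H.Reachable a b := by
  have r1 : H.Reachable x a := ⟨D.takeUntil a ha⟩
  have r2 : H.Reachable x b := ⟨D.takeUntil b hb⟩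
  exact r1.symm.trans r2

lemma card_subtype_ne {α : Type*} [Finite α] (p : α → Prop) (a : α) (ha : p a) :
    Nat.card {x // p x ∧ x ≠ a} + 1 = Nat.card {x // p x} := by
  classical
  have e : {x // p x} ≃ {x // p x ∧ x ≠ a} ⊕ Unit :=
    { toFun := fun x => if h : x.1 = a then Sum.inr Unit.unit else Sum.inl ⟨x.1, x.2, h⟩
      invFun := fun y => y.elim (fun z => ⟨z.1, z.2.1⟩) (fun _ => ⟨a, ha⟩)
      left_inv := by
        rintro ⟨x, hx⟩
        by_cases h : x = a
        · subst h; simp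
        · simp [h]
      right_inv := by
        rintro (⟨z, hz⟩ | ⟨⟩)
        · simp [hz.2]
        · simp }
  rw [Nat.card_congr e, Nat.card_sum]
  simp

lemma count_nontrivial_components [Fintype V] (H' H : SimpleGraph V) (S : Set V)
    (hsub : H' ≤ H)
    (hclosed : ∀ a b, H.Adj a b → a ∈ S → b ∈ S)
    (hpres : ∀ a b, H.Adj a b → a ∉ S → H'.Adj a b)
    (hiso : ∀ a ∈ S, ∀ b, ¬ H'.Adj a b)
    (hconn : ∀ a ∈ S, ∀ b ∈ S, H.Reachable a b)
    {a0 b0 : V} (ha0 : a0 ∈ S) (hb0 : H.Adj a0 b0) :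
    Nat.card {c : H'.ConnectedComponent // ∃ v, v ∈ c.supp ∧ (H'.neighborSet v).Nonempty} + 1 =
    Nat.card {c : H.ConnectedComponent // ∃ v, v ∈ c.supp ∧ (H.neighborSet v).Nonempty} := by
  classical
  set F : H'.ConnectedComponent → H.ConnectedComponent :=
    SimpleGraph.ConnectedComponent.map (SimpleGraph.Hom.ofLE hsub) with hF
  have hFmk : ∀ v : V, F (H'.connectedComponentMk v) = H.connectedComponentMk v := by
    intro v; rfl
  set c0 : H.ConnectedComponent := H.connectedComponentMk a0 with hc0
  have hnt0 : ∃ v, v ∈ c0.supp ∧ (H.neighborSet v).Nonempty :=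
    ⟨a0, by simp [SimpleGraph.ConnectedComponent.mem_supp_iff, hc0], ⟨b0, hb0⟩⟩
  have key : ∀ c' : H'.ConnectedComponent, (∃ v, v ∈ c'.supp ∧ (H'.neighborSet v).Nonempty) →
      (∃ v, v ∈ (F c').supp ∧ (H.neighborSet v).Nonempty) ∧ F c' ≠ c0 := by
    rintro c' ⟨v, hv, x, hx⟩
    have hmk : H'.connectedComponentMk v = c' :=
      (SimpleGraph.ConnectedComponent.mem_supp_iff _ _).1 hv
    have hFc : F c' = H.connectedComponentMk v := by
      rw [← hmk]; exact hFmk v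
    have hvS : v ∉ S := fun hS => hiso v hS x hx
    constructor
    · exact ⟨v, by rw [SimpleGraph.ConnectedComponent.mem_supp_iff, hFc], ⟨x, hsub hx⟩⟩
    · intro hcon
      rw [hFc] at hcon
      obtain ⟨p⟩ := (SimpleGraph.ConnectedComponent.eq).1 hcon
      exact (reach_out hclosed hpres p hvS).2 ha0
  let Φ : {c : H'.ConnectedComponent // ∃ v, v ∈ c.supp ∧ (H'.neighborSet v).Nonempty} →
      {c : H.ConnectedComponent // (∃ v, v ∈ c.supp ∧ (H.neighborSet v).Nonempty) ∧ c ≠ c0} :=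
    fun c' => ⟨F c'.1, key c'.1 c'.2⟩
  have hbij : Function.Bijective Φ := by
    constructor
    · rintro ⟨c1, h1⟩ ⟨c2, h2⟩ heq
      obtain ⟨v1, hv1, x1, hx1⟩ := h1
      obtain ⟨v2, hv2, x2, hx2⟩ := h2
      have hmk1 : H'.connectedComponentMk v1 = c1 :=
        (SimpleGraph.ConnectedComponent.mem_supp_iff _ _).1 hv1
      have hmk2 : H'.connectedComponentMk v2 = c2 :=
        (SimpleGraph.ConnectedComponent.mem_supp_iff _ _).1 hv2
      have hF1 : F c1 = H.connectedComponentMk v1 := by rw [← hmk1]; exact hFmk v1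
      have hF2 : F c2 = H.connectedComponentMk v2 := by rw [← hmk2]; exact hFmk v2
      have hS1 : v1 ∉ S := fun hS => hiso v1 hS x1 hx1
      have heq' : F c1 = F c2 := congrArg Subtype.val heq
      rw [hF1, hF2] at heq'
      obtain ⟨p⟩ := (SimpleGraph.ConnectedComponent.eq).1 heq'
      have hr := (reach_out hclosed hpres p hS1).1
      apply Subtype.ext
      show c1 = c2
      rw [← hmk1, ← hmk2]
      exact SimpleGraph.ConnectedComponent.sound hr
    · rintro ⟨c, ⟨v, hv, x, hx⟩, hne⟩
      have hmk : H.connectedComponentMk v = c :=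
        (SimpleGraph.ConnectedComponent.mem_supp_iff _ _).1 hv
      have hvS : v ∉ S := by
        intro hS
        apply hne
        rw [← hmk, hc0]
        exact SimpleGraph.ConnectedComponent.sound (hconn v hS a0 ha0)
      have hadj' : H'.Adj v x := hpres v x hx hvS
      refine ⟨⟨H'.connectedComponentMk v, ⟨v, ?_, ⟨x, hadj'⟩⟩⟩, ?_⟩
      · simp [SimpleGraph.ConnectedComponent.mem_supp_iff]
      · apply Subtype.ext
        show F (H'.connectedComponentMk v) = c
        rw [hFmk]
        exact hmk
  rw [Nat.card_eq_of_bijective Φ hbij]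
  exact card_subtype_ne _ c0 hnt0


lemma mem_exposedSet_iff [Fintype V] [DecidableEq V] (G : SimpleGraph V) [DecidableRel G.Adj]
    (z : Sym2 V → ℝ) (v : V) :
    v ∈ exposedSet G z ↔ ∑ e ∈ G.incidenceFinset v, z e = 0 := by
  simp [exposedSet]

lemma altWalk_mem_values {G : SimpleGraph V} {z : Sym2 V → ℝ} {u w : V} {P : G.Walk u w}
    (h : AltWalk G z P) : ∀ e ∈ P.edges, z e = 0 ∨ z e = 1 := by
  apply forall_mem_of_forall_getElem
  intro i hi
  rcases Nat.even_or_odd i with he | ho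
  · exact Or.inl ((h i hi).1 he)
  · exact Or.inr ((h i hi).2 ho)

lemma exposed_sdiff [Fintype V] [DecidableEq V] (G : SimpleGraph V) [DecidableRel G.Adj]
    (z z' : Sym2 V → ℝ) (D : Finset V) (hD : D ⊆ exposedSet G z)
    (hdiff : ∀ v, ∑ e ∈ G.incidenceFinset v, z' e =
      ∑ e ∈ G.incidenceFinset v, z e + (if v ∈ D then 1 else 0)) :
    exposedSet G z' = exposedSet G z \ D ∧
      (exposedSet G z').card = (exposedSet G z).card - D.card := by
  have hset : exposedSet G z' = exposedSet G z \ D := by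
    ext v
    rw [mem_exposedSet_iff, Finset.mem_sdiff, mem_exposedSet_iff, hdiff v]
    by_cases hv : v ∈ D
    · have h0 : ∑ e ∈ G.incidenceFinset v, z e = 0 := (mem_exposedSet_iff G z v).1 (hD hv)
      rw [h0, if_pos hv]
      simp [hv]
    · rw [if_neg hv]
      simp [hv]
  exact ⟨hset, by rw [hset, Finset.card_sdiff_of_subset hD]⟩

end Helpers

lemma case_a {V : Type*} [Fintype V] [DecidableEq V] (G : SimpleGraph V) [DecidableRel G.Adj]
    (z : Sym2 V → ℝ) (hz : ProperConfig G z)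
    (u w : V) (P : G.Walk u w) (z' : Sym2 V → ℝ)
    (huw : u ≠ w) (hu : u ∈ exposedSet G z) (hw : w ∈ exposedSet G z)
    (hP : P.IsPath) (hodd : Odd P.length) (halt : AltWalk G z P)
    (hz' : ∀ e, z' e = if e ∈ P.edges then 1 - z e else z e) :
    (exposedSet G z').card = (exposedSet G z).card - 2 ∧
    cyclesCount G z' = cyclesCount G z ∧
    (exposedSet G z').card + cyclesCount G z' < (exposedSet G z).card + cyclesCount G z := by
  classical
  have hPnil : ¬ P.Nil := by
    rw [SimpleGraph.Walk.nil_iff_length_eq]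
    intro h; rw [h] at hodd; simp at hodd
  have hPE : ∀ e ∈ P.edges, z e = 0 ∨ z e = 1 := altWalk_mem_values halt
  have hgP : ∀ (i : ℕ) (hi : i < P.edges.length),
      (fun e => z' e - z e) (P.edges[i]'hi) = if Odd i then (-1 : ℝ) else 1 := by
    intro i hi
    have hmem : P.edges[i]'hi ∈ P.edges := List.getElem_mem _
    have hz'e : z' (P.edges[i]'hi) = 1 - z (P.edges[i]'hi) := by
      rw [hz' _, if_pos hmem]
    rcases Nat.even_or_odd i with he | ho
    · have h0 := (halt i hi).1 he
      have hno : ¬ Odd i := Nat.not_odd_iff_even.2 he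
      simp [hz'e, h0, hno]
    · have h1 := (halt i hi).2 ho
      simp [hz'e, h1, ho]
  have hΔ := fun v => sum_incidence_eq_add z z' P.edges hP.edges_nodup
    (fun e he => SimpleGraph.Walk.edges_subset_edgeSet P he)
    (fun e he => by rw [hz' e, if_neg he]) v
  have hAlt := altSum_path P hP (fun e => z' e - z e) 1 (-1) hgP
  have hlast : ¬ Odd (P.length - 1) := by
    rcases hodd with ⟨m, hm⟩; simp only [Nat.odd_iff]; omega
  have hdiff : ∀ v, ∑ e ∈ G.incidenceFinset v, z' e =
      ∑ e ∈ G.incidenceFinset v, z e + (if v ∈ ({u, w} : Finset V) then 1 else 0) := by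
    intro v
    rw [hΔ v, hAlt v, if_neg hPnil]
    congr 1
    by_cases hvu : v = u
    · simp [hvu]
    · by_cases hvw : v = w
      · subst hvw
        simp [hvu, hlast]
      · simp only [if_neg hvu, if_neg hvw]
        have hnm : v ∉ ({u, w} : Finset V) := by simp [hvu, hvw]
        rw [if_neg hnm]
        by_cases hvs : v ∈ P.support <;> simp [hvs]
  have hsub : ({u, w} : Finset V) ⊆ exposedSet G z := by
    intro x hx; rcases Finset.mem_insert.1 hx with rfl | hx
    · exact hu
    · rw [Finset.mem_singleton.1 hx]; exact hw
  obtain ⟨hset, hcard⟩ := exposed_sdiff G z z' {u, w} hsub hdiff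
  have hpair : ({u, w} : Finset V).card = 2 := Finset.card_pair huw
  have hHG : HalfGraph G z' = HalfGraph G z := by
    ext a b
    show G.Adj a b ∧ z' s(a, b) = 1/2 ↔ G.Adj a b ∧ z s(a, b) = 1/2
    constructor <;> rintro ⟨hadj, hhalf⟩ <;> refine ⟨hadj, ?_⟩
    · by_cases hm : s(a, b) ∈ P.edges
      · rw [hz' _, if_pos hm] at hhalf
        rcases hPE _ hm with h0 | h1
        · rw [h0] at hhalf; norm_num at hhalf
        · rw [h1] at hhalf; norm_num at hhalf
      · rwa [hz' _, if_neg hm] at hhalf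
    · by_cases hm : s(a, b) ∈ P.edges
      · rcases hPE _ hm with h0 | h1
        · rw [h0] at hhalf; norm_num at hhalf
        · rw [h1] at hhalf; norm_num at hhalf
      · rwa [hz' _, if_neg hm]
  have hcyc : cyclesCount G z' = cyclesCount G z := by
    unfold cyclesCount; rw [hHG]
  have h2le : 2 ≤ (exposedSet G z).card := by
    calc 2 = ({u, w} : Finset V).card := hpair.symm
    _ ≤ _ := Finset.card_le_card hsub
  refine ⟨by rw [hcard, hpair], hcyc, ?_⟩
  rw [hcard, hpair, hcyc]
  omega

lemma list_sum_ones (l : List (Sym2 V)) : (l.map (fun _ => (1 : ℝ))).sum = l.length := by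
  induction l with
  | nil => simp
  | cons e t ih => simp [ih]; ring

lemma cycle_two_edges [DecidableEq V] {G : SimpleGraph V} {w : V} {C : G.Walk w w}
    (hC : C.IsCycle) (hCodd : Odd C.length) {v : V} (hv : v ∈ C.support) :
    ∃ b1 b2, b1 ≠ b2 ∧ s(v, b1) ∈ C.edges ∧ s(v, b2) ∈ C.edges := by
  have hg1 : ∀ (i : ℕ) (hi : i < C.edges.length),
      (fun _ => (1 : ℝ)) (C.edges[i]'hi) = if Odd i then (1 : ℝ) else 1 := by
    intro i hi; simp
  have hcount := altSum_cycle C hC hCodd (fun _ => (1 : ℝ)) 1 1 hg1 v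
  have h2 : ((C.edges.filter (fun e => decide (v ∈ e))).map (fun _ => (1 : ℝ))).sum = 2 := by
    rw [hcount]
    by_cases hvw : v = w
    · subst hvw; norm_num
    · rw [if_neg hvw, if_pos hv]; ring
  rw [list_sum_ones] at h2
  have hlen : (C.edges.filter (fun e => decide (v ∈ e))).length = 2 := by
    exact_mod_cast h2
  obtain ⟨e1, e2, hl⟩ := List.length_eq_two.1 hlen
  have hnd : (C.edges.filter (fun e => decide (v ∈ e))).Nodup :=
    (hC.isCircuit.isTrail.edges_nodup).filter _
  rw [hl] at hnd
  have hne : e1 ≠ e2 := by simp at hnd; exact hnd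
  have he1 : e1 ∈ C.edges ∧ v ∈ e1 := by
    have : e1 ∈ C.edges.filter (fun e => decide (v ∈ e)) := by rw [hl]; simp
    simpa using List.mem_filter.1 this
  have he2 : e2 ∈ C.edges ∧ v ∈ e2 := by
    have : e2 ∈ C.edges.filter (fun e => decide (v ∈ e)) := by rw [hl]; simp
    simpa using List.mem_filter.1 this
  obtain ⟨b1, hb1⟩ := Sym2.mem_iff_exists.1 he1.2
  obtain ⟨b2, hb2⟩ := Sym2.mem_iff_exists.1 he2.2
  refine ⟨b1, b2, ?_, hb1 ▸ he1.1, hb2 ▸ he2.1⟩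
  intro h
  exact hne (by rw [hb1, hb2, h])

lemma case_b {V : Type*} [Fintype V] [DecidableEq V] (G : SimpleGraph V) [DecidableRel G.Adj]
    (z : Sym2 V → ℝ) (hz : ProperConfig G z)
    (u w : V) (P : G.Walk u w) (C : G.Walk w w) (z' : Sym2 V → ℝ)
    (hu : u ∈ exposedSet G z) (hP : P.IsPath) (hodd : Odd P.length) (halt : AltWalk G z P)
    (hC : C.IsCycle) (hCodd : Odd C.length) (hChalf : ∀ e ∈ C.edges, z e = 1/2)
    (hPC : ∀ v ∈ P.support, v ∈ C.support → v = w)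
    (hz'C : ∀ (i : ℕ) (h : i < C.edges.length), z' (C.edges[i]'h) = if Odd i then 1 else 0)
    (hz'P : ∀ e ∈ P.edges, z' e = 1 - z e)
    (hz'out : ∀ e, e ∉ P.edges → e ∉ C.edges → z' e = z e) :
    (exposedSet G z').card = (exposedSet G z).card - 1 ∧
    cyclesCount G z' = cyclesCount G z - 1 ∧
    (exposedSet G z').card + cyclesCount G z' < (exposedSet G z).card + cyclesCount G z := by
  classical
  obtain ⟨hz01, hzsupp, hzdeg, hzdeg2, -⟩ := hz
  have hPnil : ¬ P.Nil := by
    rw [SimpleGraph.Walk.nil_iff_length_eq]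
    intro h; rw [h] at hodd; simp at hodd
  have huw : u ≠ w := by
    intro h; subst h
    rw [(SimpleGraph.Walk.isPath_iff_eq_nil (p := P)).1 hP] at hPnil
    exact hPnil SimpleGraph.Walk.nil_nil
  have hPE : ∀ e ∈ P.edges, z e = 0 ∨ z e = 1 := altWalk_mem_values halt
  have hCE : ∀ e ∈ C.edges, z' e = 0 ∨ z' e = 1 := by
    apply forall_mem_of_forall_getElem
    intro i hi
    rw [hz'C i hi]
    by_cases h : Odd i <;> simp [h]
  have huC : u ∉ C.support := fun h => huw (hPC u P.start_mem_support h)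
  have hdisj : ∀ e, e ∈ P.edges → e ∉ C.edges := by
    intro e heP heC
    induction e using Sym2.ind with
    | _ x y =>
      have hx : x = w := hPC x (P.fst_mem_support_of_mem_edges heP)
        (C.fst_mem_support_of_mem_edges heC)
      have hy : y = w := hPC y (P.snd_mem_support_of_mem_edges heP)
        (C.snd_mem_support_of_mem_edges heC)
      have : G.Adj x y := P.adj_of_mem_edges heP
      rw [hx, hy] at this
      exact G.loopless.irrefl w this
  set L : List (Sym2 V) := P.edges ++ C.edges with hL
  have hLnd : L.Nodup := by
    rw [hL, List.nodup_append]
    exact ⟨hP.edges_nodup, hC.isCircuit.isTrail.edges_nodup,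
      fun e heP f heC hef => hdisj e heP (hef ▸ heC)⟩
  have hLE : ∀ e ∈ L, e ∈ G.edgeSet := by
    intro e he
    rcases List.mem_append.1 he with h | h
    · exact P.edges_subset_edgeSet h
    · exact C.edges_subset_edgeSet h
  have hout : ∀ e, e ∉ L → z' e = z e := by
    intro e he
    rw [hL, List.mem_append] at he
    push_neg at he
    exact hz'out e he.1 he.2
  set g : Sym2 V → ℝ := fun e => z' e - z e with hg
  have hgP : ∀ (i : ℕ) (hi : i < P.edges.length),
      g (P.edges[i]'hi) = if Odd i then (-1 : ℝ) else 1 := by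
    intro i hi
    have hmem : P.edges[i]'hi ∈ P.edges := List.getElem_mem _
    have hz'e : z' (P.edges[i]'hi) = 1 - z (P.edges[i]'hi) := hz'P _ hmem
    rcases Nat.even_or_odd i with he | ho
    · have h0 := (halt i hi).1 he
      have hno : ¬ Odd i := Nat.not_odd_iff_even.2 he
      simp [hg, hz'e, h0, hno]
    · have h1 := (halt i hi).2 ho
      simp [hg, hz'e, h1, ho]
  have hgC : ∀ (i : ℕ) (hi : i < C.edges.length),
      g (C.edges[i]'hi) = if Odd i then (1/2 : ℝ) else -(1/2) := by
    intro i hi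
    have hmem : C.edges[i]'hi ∈ C.edges := List.getElem_mem _
    have hhalf := hChalf _ hmem
    rw [hg]
    simp only [hz'C i hi, hhalf]
    by_cases h : Odd i <;> simp [h] <;> norm_num
  have hΔ := fun v => sum_incidence_eq_add z z' L hLnd hLE hout v
  have hAltP := altSum_path P hP g 1 (-1) hgP
  have hAltC := altSum_cycle C hC hCodd g (-(1/2)) (1/2) hgC
  have hlast : ¬ Odd (P.length - 1) := by
    rcases hodd with ⟨m, hm⟩; simp only [Nat.odd_iff]; omega
  have hsplit : ∀ v, ((L.filter (fun e => decide (v ∈ e))).map g).sum =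
      ((P.edges.filter (fun e => decide (v ∈ e))).map g).sum +
      ((C.edges.filter (fun e => decide (v ∈ e))).map g).sum := by
    intro v
    rw [hL, List.filter_append, List.map_append, List.sum_append]
  have hdiff : ∀ v, ∑ e ∈ G.incidenceFinset v, z' e =
      ∑ e ∈ G.incidenceFinset v, z e + (if v ∈ ({u} : Finset V) then 1 else 0) := by
    intro v
    rw [hΔ v, hsplit v, hAltP v, hAltC v, if_neg hPnil]
    congr 1
    by_cases hvu : v = u
    · subst hvu
      rw [if_pos rfl, if_neg huw, if_neg huC, if_pos (Finset.mem_singleton_self _)]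
      ring
    · rw [if_neg hvu]
      have hvnu : v ∉ ({u} : Finset V) := by simp [hvu]
      rw [if_neg hvnu]
      by_cases hvw : v = w
      · subst hvw
        rw [if_pos rfl, if_neg hlast, if_pos rfl]
        ring
      · rw [if_neg hvw, if_neg hvw]
        by_cases hvp : v ∈ P.support <;> by_cases hvc : v ∈ C.support <;>
          simp [hvp, hvc] <;> ring
  have hsubD : ({u} : Finset V) ⊆ exposedSet G z := by
    intro x hx; rw [Finset.mem_singleton.1 hx]; exact hu
  obtain ⟨hset, hcard⟩ := exposed_sdiff G z z' {u} hsubD hdiff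
  rw [Finset.card_singleton] at hcard
  -- component counting
  have hnbr : ∀ a, a ∈ C.support → ∀ b, (HalfGraph G z).Adj a b → s(a, b) ∈ C.edges := by
    intro a ha b hab
    by_contra hnot
    obtain ⟨b1, b2, hb12, he1, he2⟩ := cycle_two_edges hC hCodd ha
    have hadj1 : (HalfGraph G z).Adj a b1 :=
      ⟨(SimpleGraph.mem_edgeSet G).1 (C.edges_subset_edgeSet he1), hChalf _ he1⟩
    have hadj2 : (HalfGraph G z).Adj a b2 :=
      ⟨(SimpleGraph.mem_edgeSet G).1 (C.edges_subset_edgeSet he2), hChalf _ he2⟩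
    have hb1 : b ≠ b1 := fun h => hnot (h ▸ he1)
    have hb2 : b ≠ b2 := fun h => hnot (h ▸ he2)
    have hsub3 : ({b, b1, b2} : Set V) ⊆ (HalfGraph G z).neighborSet a := by
      intro x hx
      rcases hx with rfl | rfl | rfl
      · exact hab
      · exact hadj1
      · exact hadj2
    have h3 : ({b, b1, b2} : Set V).ncard = 3 := by
      rw [Set.ncard_insert_of_notMem (by simp [hb1, hb2]) (Set.toFinite _),
        Set.ncard_pair hb12]
    have hle := Set.ncard_le_ncard hsub3 (Set.toFinite _)
    rcases hzdeg2 a with h | h <;> omega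
  have hiso' : ∀ a ∈ {x | x ∈ C.support}, ∀ b, ¬ (HalfGraph G z').Adj a b := by
    rintro a ha b ⟨hadj, hhalf⟩
    by_cases hc : s(a, b) ∈ C.edges
    · rcases hCE _ hc with h | h <;> rw [h] at hhalf <;> norm_num at hhalf
    · by_cases hp : s(a, b) ∈ P.edges
      · rw [hz'P _ hp] at hhalf
        rcases hPE _ hp with h | h <;> rw [h] at hhalf <;> norm_num at hhalf
      · rw [hz'out _ hp hc] at hhalf
        exact hc (hnbr a ha b ⟨hadj, hhalf⟩)
  have hsub' : HalfGraph G z' ≤ HalfGraph G z := by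
    rintro a b ⟨hadj, hhalf⟩
    by_cases hc : s(a, b) ∈ C.edges
    · rcases hCE _ hc with h | h <;> rw [h] at hhalf <;> norm_num at hhalf
    · by_cases hp : s(a, b) ∈ P.edges
      · rw [hz'P _ hp] at hhalf
        rcases hPE _ hp with h | h <;> rw [h] at hhalf <;> norm_num at hhalf
      · exact ⟨hadj, by rwa [hz'out _ hp hc] at hhalf⟩
  have hclosed : ∀ a b, (HalfGraph G z).Adj a b → a ∈ {x | x ∈ C.support} →
      b ∈ {x | x ∈ C.support} := by
    intro a b hab ha
    exact C.snd_mem_support_of_mem_edges (hnbr a ha b hab)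
  have hpres : ∀ a b, (HalfGraph G z).Adj a b → a ∉ {x | x ∈ C.support} →
      (HalfGraph G z').Adj a b := by
    rintro a b ⟨hadj, hhalf⟩ ha
    have hc : s(a, b) ∉ C.edges := fun h => ha (C.fst_mem_support_of_mem_edges h)
    have hp : s(a, b) ∉ P.edges := by
      intro h; rcases hPE _ h with h0 | h0 <;> rw [h0] at hhalf <;> norm_num at hhalf
    exact ⟨hadj, by rw [hz'out _ hp hc]; exact hhalf⟩
  have hCedge : ∀ e ∈ C.edges, e ∈ (HalfGraph G z).edgeSet := by
    intro e he
    induction e using Sym2.ind with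
    | _ x y => exact ⟨C.adj_of_mem_edges he, hChalf _ he⟩
  have hconn : ∀ a ∈ {x | x ∈ C.support}, ∀ b ∈ {x | x ∈ C.support},
      (HalfGraph G z).Reachable a b := by
    intro a ha b hb
    exact reachable_of_mem_support (C.transfer (HalfGraph G z) hCedge)
      (by rwa [SimpleGraph.Walk.support_transfer]) (by rwa [SimpleGraph.Walk.support_transfer])
  have ha0 : w ∈ {x | x ∈ C.support} := C.start_mem_support
  obtain ⟨b1, b2, -, he1, -⟩ := cycle_two_edges hC hCodd (C.start_mem_support)
  have hb0 : (HalfGraph G z).Adj w b1 :=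
    ⟨(SimpleGraph.mem_edgeSet G).1 (C.edges_subset_edgeSet he1), hChalf _ he1⟩
  have hcount := count_nontrivial_components (HalfGraph G z') (HalfGraph G z)
    {x | x ∈ C.support} hsub' hclosed hpres hiso' hconn ha0 hb0
  have hcc : cyclesCount G z' + 1 = cyclesCount G z := hcount
  have hpos : 1 ≤ (exposedSet G z).card := Finset.card_pos.2 ⟨u, hu⟩
  exact ⟨hcard, by omega, by omega⟩

lemma case_c {V : Type*} [Fintype V] [DecidableEq V] (G : SimpleGraph V) [DecidableRel G.Adj]
    (z : Sym2 V → ℝ) (hz : ProperConfig G z)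
    (u w : V) (P : G.Walk u w) (C : G.Walk w w) (z' : Sym2 V → ℝ)
    (hu : u ∈ exposedSet G z) (hP : P.IsPath) (heven : Even P.length) (halt : AltWalk G z P)
    (hC : C.IsCycle) (hCodd : Odd C.length)
    (hzC : ∀ (i : ℕ) (h : i < C.edges.length), z (C.edges[i]'h) = if Odd i then 1 else 0)
    (hPC : ∀ v ∈ P.support, v ∈ C.support → v = w)
    (hz'CH : ∀ e ∈ C.edges, z' e = 1/2)
    (hz'P : ∀ e ∈ P.edges, z' e = 1 - z e)
    (hz'out : ∀ e, e ∉ P.edges → e ∉ C.edges → z' e = z e) :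
    (exposedSet G z').card = (exposedSet G z).card - 1 ∧
    cyclesCount G z' = cyclesCount G z + 1 ∧
    (exposedSet G z').card + cyclesCount G z' ≤ (exposedSet G z).card + cyclesCount G z := by
  classical
  obtain ⟨hz01, hzsupp, hzdeg, hzdeg2, -⟩ := hz
  have hznn : ∀ e, 0 ≤ z e := by
    intro e; rcases hz01 e with h | h | h <;> rw [h] <;> norm_num
  have hPE : ∀ e ∈ P.edges, z e = 0 ∨ z e = 1 := altWalk_mem_values halt
  have hCE0 : ∀ e ∈ C.edges, z e = 0 ∨ z e = 1 := by
    apply forall_mem_of_forall_getElem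
    intro i hi
    rw [hzC i hi]
    by_cases h : Odd i <;> simp [h]
  have hdisj : ∀ e, e ∈ P.edges → e ∉ C.edges := by
    intro e heP heC
    induction e using Sym2.ind with
    | _ x y =>
      have hx : x = w := hPC x (P.fst_mem_support_of_mem_edges heP)
        (C.fst_mem_support_of_mem_edges heC)
      have hy : y = w := hPC y (P.snd_mem_support_of_mem_edges heP)
        (C.snd_mem_support_of_mem_edges heC)
      have : G.Adj x y := P.adj_of_mem_edges heP
      rw [hx, hy] at this
      exact G.loopless.irrefl w this
  set L : List (Sym2 V) := P.edges ++ C.edges with hL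
  have hLnd : L.Nodup := by
    rw [hL, List.nodup_append]
    exact ⟨hP.edges_nodup, hC.isCircuit.isTrail.edges_nodup,
      fun e heP f heC hef => hdisj e heP (hef ▸ heC)⟩
  have hLE : ∀ e ∈ L, e ∈ G.edgeSet := by
    intro e he
    rcases List.mem_append.1 he with h | h
    · exact P.edges_subset_edgeSet h
    · exact C.edges_subset_edgeSet h
  have hout : ∀ e, e ∉ L → z' e = z e := by
    intro e he
    rw [hL, List.mem_append] at he
    push_neg at he
    exact hz'out e he.1 he.2
  -- sums of z itself along P and C
  have hzgP : ∀ (i : ℕ) (hi : i < P.edges.length),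
      z (P.edges[i]'hi) = if Odd i then (1 : ℝ) else 0 := by
    intro i hi
    rcases Nat.even_or_odd i with he | ho
    · have h0 := (halt i hi).1 he
      have hno : ¬ Odd i := Nat.not_odd_iff_even.2 he
      simp [h0, hno]
    · have h1 := (halt i hi).2 ho
      simp [h1, ho]
  have hzgC : ∀ (i : ℕ) (hi : i < C.edges.length),
      z (C.edges[i]'hi) = if Odd i then (1 : ℝ) else 0 := hzC
  have hAltPz := altSum_path P hP z 0 1 hzgP
  have hAltCz := altSum_cycle C hC hCodd z 0 1 hzgC
  -- isolation of C.support in HalfGraph G z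
  have hiso : ∀ a ∈ {x | x ∈ C.support}, ∀ b, ¬ (HalfGraph G z).Adj a b := by
    rintro a ha b ⟨hadj, hhalf⟩
    have he'C : s(a, b) ∉ C.edges := by
      intro h; rcases hCE0 _ h with h0 | h0 <;> rw [h0] at hhalf <;> norm_num at hhalf
    have he'P : s(a, b) ∉ P.edges := by
      intro h; rcases hPE _ h with h0 | h0 <;> rw [h0] at hhalf <;> norm_num at hhalf
    have he'I : s(a, b) ∈ G.incidenceFinset a := by
      rw [SimpleGraph.mem_incidenceFinset]
      exact ⟨(SimpleGraph.mem_edgeSet G).2 hadj, Sym2.mem_mk_left a b⟩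
    by_cases hnil : P.Nil
    · -- then u = w; if a = w use exposedness, else use the cycle sum
      have huweq : u = w := hnil.eq
      by_cases haw : a = w
      · subst haw
        have hzero : ∑ e ∈ G.incidenceFinset a, z e = 0 := by
          rw [← huweq] at *
          exact (mem_exposedSet_iff G z u).1 hu
        have hle := Finset.single_le_sum (f := z) (fun e _ => hznn e) he'I
        rw [hzero, hhalf] at hle
        norm_num at hle
      · -- a internal on the cycle : the two cycle edges at a contribute 1
        have hsum1 : ((L.filter (fun e => decide (a ∈ e))).map z).sum = 1 := by
          rw [hL, List.filter_append, List.map_append, List.sum_append, hAltPz a, hAltCz a]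
          have haP : a ∉ P.support := by
            intro hs
            exact haw (hPC a hs ha)
          have hau : a ≠ u := by
            intro h; subst h; exact haP P.start_mem_support
          rw [if_pos hnil, if_neg haw, if_pos (show a ∈ C.support from ha)]
          ring
        have hTsub : insert s(a, b) ((L.filter (fun e => decide (a ∈ e))).toFinset) ⊆
            G.incidenceFinset a := by
          intro e he
          rcases Finset.mem_insert.1 he with rfl | he
          · exact he'I
          · simp only [List.mem_toFinset, List.mem_filter, decide_eq_true_eq] at he
            rw [SimpleGraph.mem_incidenceFinset]
            exact ⟨hLE e he.1, he.2⟩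
        have he'T : s(a, b) ∉ (L.filter (fun e => decide (a ∈ e))).toFinset := by
          simp only [List.mem_toFinset, List.mem_filter, decide_eq_true_eq]
          rintro ⟨heL, -⟩
          rcases List.mem_append.1 heL with h | h
          · exact he'P h
          · exact he'C h
        have hTsum : ∑ e ∈ (L.filter (fun e => decide (a ∈ e))).toFinset, z e = 1 := by
          rw [list_sum_toFinset' _ (hLnd.filter _)]
          exact hsum1
        have hge : ∑ e ∈ insert s(a, b) ((L.filter (fun e => decide (a ∈ e))).toFinset), z e ≤
            ∑ e ∈ G.incidenceFinset a, z e :=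
          Finset.sum_le_sum_of_subset_of_nonneg hTsub (fun e _ _ => hznn e)
        rw [Finset.sum_insert he'T, hTsum, hhalf] at hge
        have := hzdeg a
        linarith
    · -- P not nil
      have huw : u ≠ w := by
        intro h; subst h
        rw [(SimpleGraph.Walk.isPath_iff_eq_nil (p := P)).1 hP] at hnil
        exact hnil SimpleGraph.Walk.nil_nil
      have hlodd : Odd (P.length - 1) := by
        have hpos := (SimpleGraph.Walk.not_nil_iff_lt_length).1 hnil
        rcases heven with ⟨m, hm⟩
        simp only [Nat.odd_iff]; omega
      have hsum1 : ((L.filter (fun e => decide (a ∈ e))).map z).sum = 1 := by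
        rw [hL, List.filter_append, List.map_append, List.sum_append, hAltPz a, hAltCz a]
        rw [if_neg hnil]
        by_cases haw : a = w
        · subst haw
          have hau : a ≠ u := Ne.symm huw
          rw [if_neg hau, if_pos rfl, if_pos hlodd, if_pos rfl]
          ring
        · have haP : a ∉ P.support := fun hs => haw (hPC a hs ha)
          have hau : a ≠ u := by
            intro h; subst h; exact haP P.start_mem_support
          rw [if_neg hau, if_neg haw, if_neg haP, if_neg haw, if_pos (show a ∈ C.support from ha)]
          ring
      have hTsub : insert s(a, b) ((L.filter (fun e => decide (a ∈ e))).toFinset) ⊆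
          G.incidenceFinset a := by
        intro e he
        rcases Finset.mem_insert.1 he with rfl | he
        · exact he'I
        · simp only [List.mem_toFinset, List.mem_filter, decide_eq_true_eq] at he
          rw [SimpleGraph.mem_incidenceFinset]
          exact ⟨hLE e he.1, he.2⟩
      have he'T : s(a, b) ∉ (L.filter (fun e => decide (a ∈ e))).toFinset := by
        simp only [List.mem_toFinset, List.mem_filter, decide_eq_true_eq]
        rintro ⟨heL, -⟩
        rcases List.mem_append.1 heL with h | h
        · exact he'P h
        · exact he'C h
      have hTsum : ∑ e ∈ (L.filter (fun e => decide (a ∈ e))).toFinset, z e = 1 := by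
        rw [list_sum_toFinset' _ (hLnd.filter _)]
        exact hsum1
      have hge : ∑ e ∈ insert s(a, b) ((L.filter (fun e => decide (a ∈ e))).toFinset), z e ≤
          ∑ e ∈ G.incidenceFinset a, z e :=
        Finset.sum_le_sum_of_subset_of_nonneg hTsub (fun e _ _ => hznn e)
      rw [Finset.sum_insert he'T, hTsum, hhalf] at hge
      have := hzdeg a
      linarith
  -- the difference function
  set g : Sym2 V → ℝ := fun e => z' e - z e with hg
  have hgP : ∀ (i : ℕ) (hi : i < P.edges.length),
      g (P.edges[i]'hi) = if Odd i then (-1 : ℝ) else 1 := by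
    intro i hi
    have hmem : P.edges[i]'hi ∈ P.edges := List.getElem_mem _
    have hz'e : z' (P.edges[i]'hi) = 1 - z (P.edges[i]'hi) := hz'P _ hmem
    rcases Nat.even_or_odd i with he | ho
    · have h0 := (halt i hi).1 he
      have hno : ¬ Odd i := Nat.not_odd_iff_even.2 he
      simp [hg, hz'e, h0, hno]
    · have h1 := (halt i hi).2 ho
      simp [hg, hz'e, h1, ho]
  have hgC : ∀ (i : ℕ) (hi : i < C.edges.length),
      g (C.edges[i]'hi) = if Odd i then (-(1/2) : ℝ) else 1/2 := by
    intro i hi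
    have hmem : C.edges[i]'hi ∈ C.edges := List.getElem_mem _
    rw [hg]
    simp only [hz'CH _ hmem, hzC i hi]
    by_cases h : Odd i <;> simp [h] <;> norm_num
  have hΔ := fun v => sum_incidence_eq_add z z' L hLnd hLE hout v
  have hAltP := altSum_path P hP g 1 (-1) hgP
  have hAltC := altSum_cycle C hC hCodd g (1/2) (-(1/2)) hgC
  have hdiff : ∀ v, ∑ e ∈ G.incidenceFinset v, z' e =
      ∑ e ∈ G.incidenceFinset v, z e + (if v ∈ ({u} : Finset V) then 1 else 0) := by
    intro v
    have hsplit : ((L.filter (fun e => decide (v ∈ e))).map g).sum =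
        ((P.edges.filter (fun e => decide (v ∈ e))).map g).sum +
        ((C.edges.filter (fun e => decide (v ∈ e))).map g).sum := by
      rw [hL, List.filter_append, List.map_append, List.sum_append]
    rw [hΔ v, hsplit, hAltP v, hAltC v]
    congr 1
    by_cases hnil : P.Nil
    · have huweq : u = w := hnil.eq
      rw [if_pos hnil]
      by_cases hvw : v = w
      · rw [if_pos hvw, if_pos (by simp [hvw, huweq])]
        ring
      · rw [if_neg hvw, if_neg (by simp [huweq, hvw] : v ∉ ({u} : Finset V))]
        by_cases hvc : v ∈ C.support
        · rw [if_pos hvc]; ring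
        · rw [if_neg hvc]; ring
    · have huw : u ≠ w := by
        intro h; subst h
        rw [(SimpleGraph.Walk.isPath_iff_eq_nil (p := P)).1 hP] at hnil
        exact hnil SimpleGraph.Walk.nil_nil
      have huC : u ∉ C.support := fun h => huw (hPC u P.start_mem_support h)
      have hlodd : Odd (P.length - 1) := by
        have hpos := (SimpleGraph.Walk.not_nil_iff_lt_length).1 hnil
        rcases heven with ⟨m, hm⟩
        simp only [Nat.odd_iff]; omega
      rw [if_neg hnil]
      by_cases hvu : v = u
      · subst hvu
        rw [if_pos rfl, if_neg huw, if_neg huC, if_pos (Finset.mem_singleton_self _)]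
        ring
      · rw [if_neg hvu, if_neg (by simp [hvu] : v ∉ ({u} : Finset V))]
        by_cases hvw : v = w
        · subst hvw
          rw [if_pos rfl, if_pos hlodd, if_pos rfl]
          ring
        · rw [if_neg hvw, if_neg hvw]
          by_cases hvp : v ∈ P.support <;> by_cases hvc : v ∈ C.support <;>
            simp [hvp, hvc] <;> ring
  have hsubD : ({u} : Finset V) ⊆ exposedSet G z := by
    intro x hx; rw [Finset.mem_singleton.1 hx]; exact hu
  obtain ⟨hset, hcard⟩ := exposed_sdiff G z z' {u} hsubD hdiff
  rw [Finset.card_singleton] at hcard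
  -- component counting with roles swapped
  have hsub' : HalfGraph G z ≤ HalfGraph G z' := by
    rintro a b ⟨hadj, hhalf⟩
    have hc : s(a, b) ∉ C.edges := by
      intro h; rcases hCE0 _ h with h0 | h0 <;> rw [h0] at hhalf <;> norm_num at hhalf
    have hp : s(a, b) ∉ P.edges := by
      intro h; rcases hPE _ h with h0 | h0 <;> rw [h0] at hhalf <;> norm_num at hhalf
    exact ⟨hadj, by rw [hz'out _ hp hc]; exact hhalf⟩
  have hclosed : ∀ a b, (HalfGraph G z').Adj a b → a ∈ {x | x ∈ C.support} →
      b ∈ {x | x ∈ C.support} := by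
    rintro a b ⟨hadj, hhalf⟩ ha
    by_cases hc : s(a, b) ∈ C.edges
    · exact C.snd_mem_support_of_mem_edges hc
    · exfalso
      have hp : s(a, b) ∉ P.edges := by
        intro h
        rw [hz'P _ h] at hhalf
        rcases hPE _ h with h0 | h0 <;> rw [h0] at hhalf <;> norm_num at hhalf
      rw [hz'out _ hp hc] at hhalf
      exact hiso a ha b ⟨hadj, hhalf⟩
  have hpres : ∀ a b, (HalfGraph G z').Adj a b → a ∉ {x | x ∈ C.support} →
      (HalfGraph G z).Adj a b := by
    rintro a b ⟨hadj, hhalf⟩ ha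
    have hc : s(a, b) ∉ C.edges := fun h => ha (C.fst_mem_support_of_mem_edges h)
    have hp : s(a, b) ∉ P.edges := by
      intro h
      rw [hz'P _ h] at hhalf
      rcases hPE _ h with h0 | h0 <;> rw [h0] at hhalf <;> norm_num at hhalf
    exact ⟨hadj, by rw [← hz'out _ hp hc]; exact hhalf⟩
  have hCedge : ∀ e ∈ C.edges, e ∈ (HalfGraph G z').edgeSet := by
    intro e he
    induction e using Sym2.ind with
    | _ x y => exact ⟨C.adj_of_mem_edges he, hz'CH _ he⟩
  have hconn : ∀ a ∈ {x | x ∈ C.support}, ∀ b ∈ {x | x ∈ C.support},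
      (HalfGraph G z').Reachable a b := by
    intro a ha b hb
    exact reachable_of_mem_support (C.transfer (HalfGraph G z') hCedge)
      (by rwa [SimpleGraph.Walk.support_transfer]) (by rwa [SimpleGraph.Walk.support_transfer])
  have ha0 : w ∈ {x | x ∈ C.support} := C.start_mem_support
  obtain ⟨b1, b2, -, he1, -⟩ := cycle_two_edges hC hCodd (C.start_mem_support)
  have hb0 : (HalfGraph G z').Adj w b1 :=
    ⟨(SimpleGraph.mem_edgeSet G).1 (C.edges_subset_edgeSet he1), hz'CH _ he1⟩
  have hcount := count_nontrivial_components (HalfGraph G z) (HalfGraph G z')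
    {x | x ∈ C.support} hsub' hclosed hpres hiso hconn ha0 hb0
  have hcc : cyclesCount G z + 1 = cyclesCount G z' := hcount
  have hpos : 1 ≤ (exposedSet G z).card := Finset.card_pos.2 ⟨u, hu⟩
  exact ⟨hcard, by omega, by omega⟩

/-- accounting of the three primal moves of the half-integral
matching procedure.  Writing `t` for the number of exposed nodes and `k` for the
number of odd half-cycles of the current proper-half-integral solution `z`:
(a) augmenting along an odd alternating path between two exposed nodes decreases
`t` by `2` and leaves `k` unchanged; (b) alternating along an odd alternating path
from an exposed node to an odd half-cycle and converting the cycle into a blossom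
decreases both `t` and `k` by `1`; (c) alternating along an even alternating path
from an exposed node to the base of a blossom and converting the blossom into a
half-cycle decreases `t` by `1` and increases `k` by `1`.  In all three cases
`t + k` does not increase, and it strictly decreases in cases (a) and (b). -/
theorem half_integral_moves_accounting
    {V : Type*} [Fintype V] [DecidableEq V] (G : SimpleGraph V) [DecidableRel G.Adj]
    (z : Sym2 V → ℝ) (hz : ProperConfig G z) :
    -- case (a)
    ((∀ (u w : V) (P : G.Walk u w) (z' : Sym2 V → ℝ),
      u ≠ w → u ∈ exposedSet G z → w ∈ exposedSet G z →
      P.IsPath → Odd P.length → AltWalk G z P →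
      (∀ e, z' e = if e ∈ P.edges then 1 - z e else z e) →
      (exposedSet G z').card = (exposedSet G z).card - 2 ∧
      cyclesCount G z' = cyclesCount G z ∧
      (exposedSet G z').card + cyclesCount G z' <
        (exposedSet G z).card + cyclesCount G z) ∧
    -- case (b)
    (∀ (u w : V) (P : G.Walk u w) (C : G.Walk w w) (z' : Sym2 V → ℝ),
      u ∈ exposedSet G z → P.IsPath → Odd P.length → AltWalk G z P →
      C.IsCycle → Odd C.length → (∀ e ∈ C.edges, z e = 1/2) →
      (∀ v ∈ P.support, v ∈ C.support → v = w) →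
      (∀ (i : ℕ) (h : i < C.edges.length),
        z' (C.edges[i]'h) = if Odd i then 1 else 0) →
      (∀ e ∈ P.edges, z' e = 1 - z e) →
      (∀ e, e ∉ P.edges → e ∉ C.edges → z' e = z e) →
      (exposedSet G z').card = (exposedSet G z).card - 1 ∧
      cyclesCount G z' = cyclesCount G z - 1 ∧
      (exposedSet G z').card + cyclesCount G z' <
        (exposedSet G z).card + cyclesCount G z) ∧
    -- case (c)
    (∀ (u w : V) (P : G.Walk u w) (C : G.Walk w w) (z' : Sym2 V → ℝ),
      u ∈ exposedSet G z → P.IsPath → Even P.length → AltWalk G z P →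
      C.IsCycle → Odd C.length →
      (∀ (i : ℕ) (h : i < C.edges.length),
        z (C.edges[i]'h) = if Odd i then 1 else 0) →
      (∀ v ∈ P.support, v ∈ C.support → v = w) →
      (∀ e ∈ C.edges, z' e = 1/2) →
      (∀ e ∈ P.edges, z' e = 1 - z e) →
      (∀ e, e ∉ P.edges → e ∉ C.edges → z' e = z e) →
      (exposedSet G z').card = (exposedSet G z).card - 1 ∧
      cyclesCount G z' = cyclesCount G z + 1 ∧
      (exposedSet G z').card + cyclesCount G z' ≤
        (exposedSet G z).card + cyclesCount G z)) := by
  refine ⟨?_, ?_, ?_⟩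
  · intro u w P z' huw hu hw hP hodd halt hz'
    exact case_a G z hz u w P z' huw hu hw hP hodd halt hz'
  · intro u w P C z' hu hP hodd halt hC hCodd hChalf hPC hz'C hz'P hz'out
    exact case_b G z hz u w P C z' hu hP hodd halt hC hCodd hChalf hPC hz'C hz'P hz'out
  · intro u w P C z' hu hP heven halt hC hCodd hzC hPC hz'CH hz'P hz'out
    exact case_c G z hz u w P C z' hu hP heven halt hC hCodd hzC hPC hz'CH hz'P hz'out
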